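/- Let A be an n × n Hermitian matrix and 1 ≤ q ≤ n. The following are equivalent: (i) the sum of any q eigenvalues of A is at least M; (ii) for every collection of q orthonormal vectors e¹, …, e^q in ℂⁿ, ∑_{s=1}^{q} ⟨A e^s, e^s⟩ ≥ M. -/

import Mathlib

open Finset

lemma quad_eq {n : ℕ} (A : Matrix (Fin n) (Fin n) ℂ) (hA : A.IsHermitian)
    (x : EuclideanSpace ℂ (Fin n)) :
    (∑ i, ∑ j, (starRingEnd ℂ) (x i) * A i j * x j).re =
      ∑ k, hA.eigenvalues k * ‖hA.eigenvectorBasis.repr x k‖ ^ 2 := by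
  set b := hA.eigenvectorBasis with hb
  have h1 : (∑ i, ∑ j, (starRingEnd ℂ) (x i) * A i j * x j)
      = inner ℂ x (WithLp.toLp 2 (A.mulVec x) : EuclideanSpace ℂ (Fin n)) := by
    simp [PiLp.inner_apply, Matrix.mulVec, dotProduct, Finset.mul_sum, mul_assoc]
    simp only [Finset.sum_mul]
    exact Finset.sum_congr rfl fun i _ => Finset.sum_congr rfl fun j _ => by ring
  have hmv : (WithLp.toLp 2 (A.mulVec x) : EuclideanSpace ℂ (Fin n))
      = ∑ k, (b.repr x k * (hA.eigenvalues k : ℂ)) • (b k : EuclideanSpace ℂ (Fin n)) := by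
    conv_lhs => rw [← b.sum_repr x]
    simp only [WithLp.ofLp_sum, WithLp.ofLp_smul, Matrix.mulVec_sum, Matrix.mulVec_smul,
      hb, hA.mulVec_eigenvectorBasis, RCLike.real_smul_eq_coe_smul (K := ℂ), smul_smul,
      WithLp.toLp_sum, WithLp.toLp_smul, WithLp.toLp_ofLp]
    rfl
  rw [h1, hmv, inner_sum, Complex.re_sum]
  refine Finset.sum_congr rfl fun k _ => ?_
  rw [inner_smul_right, OrthonormalBasis.repr_apply_apply, ← inner_conj_symm]
  set d := (inner (𝕜 := ℂ) x (b k))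
  have h2 : (starRingEnd ℂ) d * (hA.eigenvalues k : ℂ) * d
      = (hA.eigenvalues k : ℂ) * (d * (starRingEnd ℂ) d) := by ring
  rw [h2, RCLike.mul_conj]
  simp [RCLike.norm_conj]
  left
  rw [← Complex.ofReal_pow, Complex.ofReal_re]
open Finset
lemma filter_eq_map (n q : ℕ) (h : q ≤ n) :
    ((univ : Finset (Fin n)).filter (fun j : Fin n => (j : ℕ) < q)) = univ.map (Fin.castLEEmb h) := by
  ext j
  simp only [mem_filter, mem_univ, true_and, mem_map, Fin.castLEEmb_apply]
  constructor
  · intro hj; exact ⟨⟨j, hj⟩, Fin.ext rfl⟩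
  · rintro ⟨s, rfl⟩; simpa using s.2

lemma key {n q : ℕ} (hq1 : 1 ≤ q) (hqn : q ≤ n) (g u : Fin n → ℝ) (hg : Monotone g)
    (hu0 : ∀ j, 0 ≤ u j) (hu1 : ∀ j, u j ≤ 1) (hsum : ∑ j, u j = q) :
    ∑ s : Fin q, g (Fin.castLE hqn s) ≤ ∑ j, g j * u j := by
  have hq1n : q - 1 < n := by omega
  set μ := g ⟨q - 1, hq1n⟩ with hμ
  set S := (univ : Finset (Fin n)).filter (fun j : Fin n => (j : ℕ) < q) with hS
  have hSmap : S = univ.map (Fin.castLEEmb hqn) := filter_eq_map n q hqn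
  have hcard : (S.card : ℝ) = q := by rw [hSmap, card_map, card_univ, Fintype.card_fin]
  -- sum over Fin q equals sum over S
  have h0 : ∑ s : Fin q, g (Fin.castLE hqn s) = ∑ j ∈ S, g j := by
    rw [hSmap, Finset.sum_map]; rfl
  rw [h0]
  -- bounds
  have hle : ∀ j ∈ S, g j ≤ μ := by
    intro j hj
    rw [hS, mem_filter] at hj
    exact hg (by simp [Fin.le_def]; omega)
  have hge : ∀ j ∈ Sᶜ, μ ≤ g j := by
    intro j hj
    rw [hS, mem_compl, mem_filter] at hj
    simp only [mem_univ, true_and, not_lt] at hj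
    exact hg (by simp [Fin.le_def]; omega)
  have split : ∑ j, g j * u j = ∑ j ∈ S, g j * u j + ∑ j ∈ Sᶜ, g j * u j :=
    (Finset.sum_add_sum_compl S _).symm
  have husum : ∑ j ∈ S, u j + ∑ j ∈ Sᶜ, u j = q := by
    rw [Finset.sum_add_sum_compl]; exact hsum
  have h1 : ∑ j ∈ S, (g j - g j * u j) ≤ ∑ j ∈ S, μ * (1 - u j) := by
    refine Finset.sum_le_sum fun j hj => ?_
    have := hle j hj
    nlinarith [hu1 j, hu0 j]
  have h2 : ∑ j ∈ Sᶜ, μ * u j ≤ ∑ j ∈ Sᶜ, g j * u j := by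
    refine Finset.sum_le_sum fun j hj => ?_
    exact mul_le_mul_of_nonneg_right (hge j hj) (hu0 j)
  have h3 : ∑ j ∈ S, μ * (1 - u j) = μ * ((q : ℝ) - ∑ j ∈ S, u j) := by
    rw [← Finset.mul_sum, Finset.sum_sub_distrib, Finset.sum_const, nsmul_eq_mul, mul_one, hcard]
  have h4 : (q : ℝ) - ∑ j ∈ S, u j = ∑ j ∈ Sᶜ, u j := by linarith
  have h5 : ∑ j ∈ S, (g j - g j * u j) = ∑ j ∈ S, g j - ∑ j ∈ S, g j * u j :=
    Finset.sum_sub_distrib _ _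
  rw [split]
  rw [h5, h3, h4, Finset.mul_sum] at h1
  linarith

theorem stmt1 {n q : ℕ} (hq1 : 1 ≤ q) (hqn : q ≤ n)
    (A : Matrix (Fin n) (Fin n) ℂ) (hA : A.IsHermitian) (M : ℝ) :
    (∀ σ : Fin q → Fin n, Function.Injective σ → M ≤ ∑ s, hA.eigenvalues (σ s)) ↔
      (∀ e : Fin q → EuclideanSpace ℂ (Fin n), Orthonormal ℂ e →
        M ≤ (∑ s, ∑ i, ∑ j, (starRingEnd ℂ) (e s i) * A i j * e s j).re) := by
  set b := hA.eigenvectorBasis with hb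
  set lam := hA.eigenvalues with hlam
  constructor
  · intro h e he
    rw [Complex.re_sum]
    have hquad : ∀ s, (∑ i, ∑ j, (starRingEnd ℂ) (e s i) * A i j * e s j).re
        = ∑ k, lam k * ‖b.repr (e s) k‖ ^ 2 := fun s => quad_eq A hA (e s)
    simp_rw [hquad]
    rw [Finset.sum_comm]
    set t : Fin n → ℝ := fun k => ∑ s, ‖b.repr (e s) k‖ ^ 2 with ht
    have hsum' : ∑ k, lam k * t k = ∑ k, ∑ s, lam k * ‖b.repr (e s) k‖ ^ 2 := by
      simp [ht, Finset.mul_sum]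
    have ht0 : ∀ k, 0 ≤ t k := fun k => Finset.sum_nonneg fun s _ => sq_nonneg _
    have ht1 : ∀ k, t k ≤ 1 := by
      intro k
      have hb1 : ∑ s : Fin q, ‖(inner ℂ (e s) (b k : EuclideanSpace ℂ (Fin n)) : ℂ)‖ ^ 2
          ≤ ‖(b k : EuclideanSpace ℂ (Fin n))‖ ^ 2 := he.sum_inner_products_le _
      have : t k = ∑ s : Fin q, ‖(inner ℂ (e s) (b k : EuclideanSpace ℂ (Fin n)) : ℂ)‖ ^ 2 := by
        refine Finset.sum_congr rfl fun s _ => ?_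
        rw [OrthonormalBasis.repr_apply_apply, norm_inner_symm]
      rw [this]
      simpa [b.orthonormal.1 k] using hb1
    have htq : ∑ k, t k = q := by
      rw [ht, Finset.sum_comm]
      have : ∀ s : Fin q, ∑ k, ‖b.repr (e s) k‖ ^ 2 = 1 := by
        intro s
        have hn : ‖b.repr (e s)‖ = ‖e s‖ := b.repr.norm_map (e s)
        have := EuclideanSpace.norm_eq (b.repr (e s))
        have h2 : ‖b.repr (e s)‖ ^ 2 = ∑ k, ‖b.repr (e s) k‖ ^ 2 := by
          rw [this, Real.sq_sqrt (Finset.sum_nonneg fun k _ => sq_nonneg _)]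
        rw [← h2, hn, he.1 s, one_pow]
      rw [Finset.sum_congr rfl fun s _ => this s]
      simp
    -- sorted permutation
    set τ := Tuple.sort lam with hτ
    have hmono : Monotone (lam ∘ τ) := Tuple.monotone_sort lam
    have hkey := key hq1 hqn (lam ∘ τ) (t ∘ τ) hmono
      (fun j => ht0 _) (fun j => ht1 _)
      (by rw [← htq]; exact Fintype.sum_equiv τ _ _ fun j => rfl)
    have hrei : ∑ j, (lam ∘ τ) j * (t ∘ τ) j = ∑ k, lam k * t k :=
      Fintype.sum_equiv τ _ _ fun j => rfl
    have hσ := h (fun s => τ (Fin.castLE hqn s))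
      (fun s s' hss => by
        have := τ.injective hss
        exact Fin.castLE_injective hqn this)
    calc M ≤ ∑ s : Fin q, lam (τ (Fin.castLE hqn s)) := hσ
      _ = ∑ s : Fin q, (lam ∘ τ) (Fin.castLE hqn s) := rfl
      _ ≤ ∑ j, (lam ∘ τ) j * (t ∘ τ) j := hkey
      _ = ∑ k, lam k * t k := hrei
      _ = _ := hsum'
  · intro h σ hσ
    have he : Orthonormal ℂ (fun s => (b (σ s) : EuclideanSpace ℂ (Fin n))) :=
      b.orthonormal.comp σ hσ
    have := h _ he
    rw [Complex.re_sum] at this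
    refine le_trans this (le_of_eq ?_)
    refine Finset.sum_congr rfl fun s _ => ?_
    rw [quad_eq A hA]
    rw [show (hA.eigenvectorBasis.repr (b (σ s))) = EuclideanSpace.single (σ s) (1 : ℂ) from
      b.repr_self (σ s)]
    rw [Finset.sum_eq_single (σ s)]
    · simp [EuclideanSpace.single_apply]; rfl
    · intro k _ hk
      simp [EuclideanSpace.single_apply, hk]
    · simp
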